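/- Let K be a field, n ≥ 2, q ∈ K a primitive n-th root of unity, and A_1(q) the quantum Weyl algebra. Let h := y·x + (q−1)^{-1} ∈ A_1(q). Then the quotient of A_1(q) by the two-sided ideal generated by h is isomorphic as a K-algebra to the Laurent polynomial ring K[X, X^{-1}], via an isomorphism sending the image of x to X. -/

import Mathlib

/-- The defining relation of the quantum Weyl algebra `A_1(q)`: it is generated over `K` by
`x` (the generator `ι K 0`) and `y` (the generator `ι K 1`) subject to `x·y = q·y·x + 1`. -/
inductive QWRel (K : Type) [Field K] (q : K) :
    FreeAlgebra K (Fin 2) → FreeAlgebra K (Fin 2) → Prop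
  | rel : QWRel K q (FreeAlgebra.ι K (0 : Fin 2) * FreeAlgebra.ι K (1 : Fin 2))
      (algebraMap K (FreeAlgebra K (Fin 2)) q *
        (FreeAlgebra.ι K (1 : Fin 2) * FreeAlgebra.ι K (0 : Fin 2)) + 1)

/-- The quantum Weyl algebra `A_1(q)`: the quotient of the free `K`-algebra `K⟨x,y⟩` by the
two-sided ideal generated by `x·y − q·y·x − 1`. -/
abbrev QW (K : Type) [Field K] (q : K) : Type := RingQuot (QWRel K q)

/-- The image of the generator `x` in `A_1(q)`. -/
noncomputable def QWx (K : Type) [Field K] (q : K) : QW K q :=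
  RingQuot.mkAlgHom K (QWRel K q) (FreeAlgebra.ι K (0 : Fin 2))

/-- The image of the generator `y` in `A_1(q)`. -/
noncomputable def QWy (K : Type) [Field K] (q : K) : QW K q :=
  RingQuot.mkAlgHom K (QWRel K q) (FreeAlgebra.ι K (1 : Fin 2))

open LaurentPolynomial

/-- Let `K` be a field, `n ≥ 2`, `q ∈ K` a primitive `n`-th root of unity,
and `A_1(q)` the quantum Weyl algebra. Let `h := y·x + (q−1)⁻¹`. Then the quotient of
`A_1(q)` by the two-sided ideal generated by `h` is `K`-algebra isomorphic to the Laurent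
polynomial ring `K[X, X⁻¹]`, via an isomorphism sending the image of `x` to `X` (expressed via
a surjective `K`-algebra homomorphism `A_1(q) → K[X, X⁻¹]` sending `x ↦ X` whose kernel is
the two-sided ideal generated by `h`). -/
theorem stmt_14 (K : Type) [Field K] (n : ℕ) (hn : 2 ≤ n) (q : K)
    (hq : IsPrimitiveRoot q n) :
    ∃ f : QW K q →ₐ[K] LaurentPolynomial K,
      Function.Surjective f ∧
      f (QWx K q) = LaurentPolynomial.T 1 ∧
      ∀ r : QW K q, f r = 0 ↔
        r ∈ (TwoSidedIdeal.span
          {QWy K q * QWx K q + algebraMap K (QW K q) (q - 1)⁻¹} :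
            TwoSidedIdeal (QW K q)) := by
  have hq1 : q ≠ 1 := hq.ne_one (by omega)
  have h1q : (1 : K) - q ≠ 0 := sub_ne_zero.mpr (Ne.symm hq1)
  set c : K := (1 - q)⁻¹ with hc_def
  have hc : q * c + 1 = c := by
    rw [hc_def]; field_simp; ring
  have hc' : (1 - q) * c = 1 := mul_inv_cancel₀ h1q
  have hc'' : c * (1 - q) = 1 := inv_mul_cancel₀ h1q
  have hcneg : c = -(q - 1)⁻¹ := by
    rw [hc_def, ← inv_neg, neg_sub]
  -- the algebra map to Laurent polynomials
  set F : FreeAlgebra K (Fin 2) →ₐ[K] LaurentPolynomial K :=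
    FreeAlgebra.lift K ![T 1, C c * T (-1)] with hF_def
  have hF0 : F (FreeAlgebra.ι K (0 : Fin 2)) = T 1 := by
    simp [hF_def]
  have hF1 : F (FreeAlgebra.ι K (1 : Fin 2)) = C c * T (-1) := by
    simp [hF_def]
  have hT10 : (T 1 : LaurentPolynomial K) * T (-1) = 1 := by
    rw [← T_add]; norm_num [T_zero]
  have hrel : ∀ ⦃x y : FreeAlgebra K (Fin 2)⦄, QWRel K q x y → F x = F y := by
    rintro _ _ ⟨⟩
    rw [map_mul, map_add, map_mul, map_mul, hF0, hF1, map_one, AlgHom.commutes]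
    have : (algebraMap K (LaurentPolynomial K)) q = C q := rfl
    rw [this]
    have lhs : (T 1 : LaurentPolynomial K) * (C c * T (-1)) = C c := by
      rw [mul_comm, mul_assoc]
      rw [show (T (-1) : LaurentPolynomial K) * T 1 = 1 by rw [← T_add]; norm_num [T_zero]]
      rw [mul_one]
    rw [lhs]
    have rhs : (C q : LaurentPolynomial K) * (C c * T (-1) * T 1) + 1 = C c := by
      rw [mul_assoc (C c), show (T (-1) : LaurentPolynomial K) * T 1 = 1 by
        rw [← T_add]; norm_num [T_zero], mul_one, ← map_mul,
        show (1 : LaurentPolynomial K) = C 1 from (map_one C).symm, ← map_add, hc]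
    rw [rhs]
  set f : QW K q →ₐ[K] LaurentPolynomial K := RingQuot.liftAlgHom K ⟨F, hrel⟩ with hf_def
  have hfmk : ∀ a : FreeAlgebra K (Fin 2), f (RingQuot.mkAlgHom K (QWRel K q) a) = F a :=
    fun a => RingQuot.liftAlgHom_mkAlgHom_apply K F hrel a
  have hfx : f (QWx K q) = T 1 := by rw [QWx, hfmk, hF0]
  have hfy : f (QWy K q) = C c * T (-1) := by rw [QWy, hfmk, hF1]
  have halgC : ∀ a : K, (algebraMap K (LaurentPolynomial K)) a = C a := fun a => rfl
  have hfC : ∀ a : K, f (algebraMap K (QW K q) a) = C a := fun a => by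
    rw [AlgHom.commutes, halgC]
  -- the element h
  set hh : QW K q := QWy K q * QWx K q + algebraMap K (QW K q) (q - 1)⁻¹ with hh_def
  have fh : f hh = 0 := by
    rw [hh_def, map_add, map_mul, hfy, hfx, hfC, mul_assoc,
      show (T (-1) : LaurentPolynomial K) * T 1 = 1 by rw [← T_add]; norm_num [T_zero],
      mul_one, ← map_add, show c + (q - 1)⁻¹ = 0 by rw [hcneg]; ring, map_zero]
  -- the quotient
  set I : TwoSidedIdeal (QW K q) := TwoSidedIdeal.span {hh} with hI_def
  set π : QW K q →+* I.ringCon.Quotient := I.ringCon.mk' with hπ_def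
  have hker : ∀ r : QW K q, π r = 0 ↔ r ∈ I := by
    intro r
    rw [TwoSidedIdeal.mem_iff]
    exact RingCon.eq _
  have hπh : π hh = 0 := (hker hh).mpr (TwoSidedIdeal.subset_span rfl)
  have hcomm : ∀ (a : K) (r : QW K q),
      π (algebraMap K (QW K q) a) * π r = π r * π (algebraMap K (QW K q) a) := by
    intro a r
    rw [← map_mul, ← map_mul, Algebra.commutes]
  have hmulC : ∀ a b : K, π (algebraMap K (QW K q) a) * π (algebraMap K (QW K q) b)
      = π (algebraMap K (QW K q) (a * b)) := by
    intro a b; rw [← map_mul, ← map_mul]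
  have hπyx : π (QWy K q * QWx K q) = π (algebraMap K (QW K q) c) := by
    have : π (QWy K q * QWx K q) + π (algebraMap K (QW K q) (q - 1)⁻¹) = 0 := by
      rw [← map_add, ← hh_def, hπh]
    have h2 : π (QWy K q * QWx K q) = -π (algebraMap K (QW K q) (q - 1)⁻¹) :=
      eq_neg_of_add_eq_zero_left this
    rw [h2, ← map_neg, ← map_neg, hcneg]
  have hxyrel : QWx K q * QWy K q = algebraMap K (QW K q) q * (QWy K q * QWx K q) + 1 := by
    have := RingQuot.mkAlgHom_rel K (QWRel.rel (K := K) (q := q))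
    rw [map_mul, map_add, map_mul, map_mul, map_one, AlgHom.commutes] at this
    exact this
  have hπxy : π (QWx K q * QWy K q) = π (algebraMap K (QW K q) c) := by
    have h1 : π ((algebraMap K (QW K q)) (q * c)) + 1
        = π ((algebraMap K (QW K q)) (q * c + 1)) := by
      simp [map_add, map_one]
    rw [hxyrel, map_add, map_mul, hπyx, map_one, hmulC, h1, hc]
  -- the unit
  set u : (I.ringCon.Quotient)ˣ :=
    { val := π (QWx K q)
      inv := π (algebraMap K (QW K q) (1 - q)) * π (QWy K q)
      val_inv := by
        rw [← mul_assoc, ← hcomm, mul_assoc, ← map_mul, hπxy, hmulC, hc', map_one, map_one]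
      inv_val := by
        rw [mul_assoc, ← map_mul, hπyx, hmulC, hc', map_one, map_one] } with hu_def
  have hucoe : (u : I.ringCon.Quotient) = π (QWx K q) := rfl
  have huinv : ((u⁻¹ : _ˣ) : I.ringCon.Quotient)
      = π (algebraMap K (QW K q) (1 - q)) * π (QWy K q) := rfl
  -- the inverse-direction ring hom g
  have hcomm2 : ∀ (a : K) (z : Multiplicative ℤ),
      Commute ((π.comp (algebraMap K (QW K q))) a)
        (((Units.coeHom I.ringCon.Quotient).comp (zpowersHom _ u)) z) := by
    intro a z
    have h1 : Commute (π (algebraMap K (QW K q) a)) (u : I.ringCon.Quotient) := hcomm a _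
    simpa [zpowersHom_apply] using h1.units_zpow_right z.toAdd
  set g : LaurentPolynomial K →+* I.ringCon.Quotient :=
    AddMonoidAlgebra.liftNCRingHom (π.comp (algebraMap K (QW K q)))
      ((Units.coeHom I.ringCon.Quotient).comp (zpowersHom _ u)) hcomm2 with hg_def
  have hgsingle : ∀ (m : ℤ) (a : K),
      g (AddMonoidAlgebra.single m a) = π (algebraMap K (QW K q) a) * ((u ^ m : _ˣ) : I.ringCon.Quotient) := by
    intro m a
    exact AddMonoidAlgebra.liftNC_single _ _ m a
  -- key: g ∘ f = π
  have key : ∀ r : QW K q, g (f r) = π r := by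
    intro r
    obtain ⟨a, rfl⟩ := RingQuot.mkAlgHom_surjective K (QWRel K q) r
    induction a using FreeAlgebra.induction with
    | grade0 a =>
      rw [(RingQuot.mkAlgHom K (QWRel K q)).commutes a, hfC, ← single_eq_C, hgsingle,
        zpow_zero, Units.val_one, mul_one]
    | grade1 i =>
      fin_cases i
      · show g (f (RingQuot.mkAlgHom K (QWRel K q) (FreeAlgebra.ι K (0 : Fin 2))))
            = π (RingQuot.mkAlgHom K (QWRel K q) (FreeAlgebra.ι K (0 : Fin 2)))
        rw [hfmk, hF0]
        have : (T 1 : LaurentPolynomial K) = AddMonoidAlgebra.single (1 : ℤ) (1 : K) := rfl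
        rw [this, hgsingle, map_one, map_one, one_mul, zpow_one, hucoe]
        rfl
      · show g (f (RingQuot.mkAlgHom K (QWRel K q) (FreeAlgebra.ι K (1 : Fin 2))))
            = π (RingQuot.mkAlgHom K (QWRel K q) (FreeAlgebra.ι K (1 : Fin 2)))
        rw [hfmk, hF1]
        have : (C c * T (-1) : LaurentPolynomial K) = AddMonoidAlgebra.single (-1 : ℤ) c :=
          (single_eq_C_mul_T c (-1)).symm
        rw [this, hgsingle, zpow_neg_one, huinv, ← mul_assoc, hmulC, hc'', map_one, map_one, one_mul]
        rfl
    | mul a b ha hb =>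
      rw [map_mul, map_mul, map_mul, ha, hb, map_mul]
    | add a b ha hb =>
      rw [map_add, map_add, map_add, ha, hb, map_add]
  -- surjectivity
  have hTn : ∀ m : ℤ, ∃ r : QW K q, f r = T m := by
    intro m
    induction m using Int.induction_on with
    | zero => exact ⟨1, by rw [map_one, T_zero]⟩
    | succ m ih =>
      obtain ⟨r, hr⟩ := ih
      exact ⟨r * QWx K q, by rw [map_mul, hr, hfx, ← T_add]⟩
    | pred m ih =>
      obtain ⟨r, hr⟩ := ih
      refine ⟨r * (algebraMap K (QW K q) (1 - q) * QWy K q), ?_⟩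
      rw [map_mul, map_mul, hr, hfC, hfy, ← mul_assoc (C (1 - q)), ← map_mul, hc',
        map_one C, one_mul, ← T_add]
      congr 1
  have hsurj : Function.Surjective f := by
    intro p
    induction p using LaurentPolynomial.induction_on' with
    | add p q hp hq =>
      obtain ⟨r, hr⟩ := hp
      obtain ⟨s, hs⟩ := hq
      exact ⟨r + s, by rw [map_add, hr, hs]⟩
    | C_mul_T m a =>
      obtain ⟨r, hr⟩ := hTn m
      exact ⟨algebraMap K (QW K q) a * r, by rw [map_mul, hr, hfC]⟩
  refine ⟨f, hsurj, hfx, fun r => ⟨fun h0 => ?_, fun hr => ?_⟩⟩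
  · have : π r = 0 := by rw [← key r, h0, map_zero]
    exact (hker r).mp this
  · have hmem : r ∈ TwoSidedIdeal.ker f := by
      refine TwoSidedIdeal.mem_span_iff.mp hr (TwoSidedIdeal.ker f) ?_
      intro s hs
      rw [Set.mem_singleton_iff] at hs
      subst hs
      exact (TwoSidedIdeal.mem_ker f).mpr fh
    exact (TwoSidedIdeal.mem_ker f).mp hmem
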